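/- arXiv:1707.08904 — 2 statements merged into one kernel-verified Lean document; each statement's English description precedes it below -/
import Mathlib

section
/- For $x > 1$, the digamma function satisfies $\psi(x) = \ln(x - \tfrac12) + O(1/x^2)$; precisely, there exists a constant $C > 0$ such that $|\psi(x) - \ln(x - \tfrac12)| \le C/x^2$ for all $x > 1$. -/
/-- The digamma function `ψ = Γ'/Γ`, as the derivative of `log ∘ Γ` on `(0,∞)`. -/
noncomputable def digamma (x : ℝ) : ℝ := deriv (fun y => Real.log (Real.Gamma y)) x

lemma hasDerivAt_digamma {x : ℝ} (hx : 0 < x) :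
    HasDerivAt (fun y => Real.log (Real.Gamma y)) (digamma x) x := by
  have hg : DifferentiableAt ℝ Real.Gamma x :=
    Real.differentiableAt_Gamma fun m =>
      ((neg_nonpos.mpr (Nat.cast_nonneg m)).trans_lt hx).ne'
  exact (hg.log (Real.Gamma_pos_of_pos hx).ne').hasDerivAt

lemma digamma_add_one {x : ℝ} (hx : 0 < x) :
    digamma (x + 1) = digamma x + 1 / x := by
  have h1 : HasDerivAt (fun y => Real.log (Real.Gamma (y + 1))) (digamma (x + 1)) x := by
    have := (hasDerivAt_digamma (by linarith : (0:ℝ) < x + 1)).comp x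
      ((hasDerivAt_id x).add_const 1)
    simpa [Function.comp_def] using this
  have h2 : HasDerivAt (fun y => Real.log y + Real.log (Real.Gamma y))
      (1 / x + digamma x) x := by
    simpa [one_div, Pi.add_def] using (Real.hasDerivAt_log hx.ne').add (hasDerivAt_digamma hx)
  have hev : (fun y => Real.log y + Real.log (Real.Gamma y))
      =ᶠ[nhds x] fun y => Real.log (Real.Gamma (y + 1)) := by
    filter_upwards [IsOpen.mem_nhds isOpen_Ioi hx] with y (hy : 0 < y)
    rw [Real.Gamma_add_one hy.ne', Real.log_mul hy.ne' (Real.Gamma_pos_of_pos hy).ne']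
  have := (h1.congr_of_eventuallyEq hev).unique h2
  linarith [this]

lemma digamma_add_nat {x : ℝ} (hx : 0 < x) (n : ℕ) :
    digamma (x + n) = digamma x + ∑ k ∈ Finset.range n, 1 / (x + k) := by
  induction n with
  | zero => simp
  | succ n ih =>
    have h1 : (x + (n + 1 : ℕ) : ℝ) = (x + n) + 1 := by push_cast; ring
    rw [h1, digamma_add_one (by positivity), ih, Finset.sum_range_succ]
    ring

lemma digamma_le_log {x : ℝ} (hx : 0 < x) : digamma x ≤ Real.log x := by
  have h := Real.convexOn_log_Gamma.deriv_le_slope (Set.mem_Ioi.mpr hx)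
    (Set.mem_Ioi.mpr (by linarith : (0:ℝ) < x + 1)) (by linarith)
    ((hasDerivAt_digamma hx).differentiableAt)
  have hs : slope (Real.log ∘ Real.Gamma) x (x + 1) = Real.log x := by
    rw [slope_def_field]
    simp only [Function.comp_apply]
    rw [Real.Gamma_add_one hx.ne', Real.log_mul hx.ne' (Real.Gamma_pos_of_pos hx).ne']
    field_simp; ring
  rw [hs] at h
  exact h

lemma log_le_digamma {x : ℝ} (hx : 1 < x) : Real.log (x - 1) ≤ digamma x := by
  have hx1 : (0:ℝ) < x - 1 := by linarith
  have h := Real.convexOn_log_Gamma.slope_le_deriv (Set.mem_Ioi.mpr hx1)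
    (Set.mem_Ioi.mpr (by linarith : (0:ℝ) < x)) (by linarith)
    ((hasDerivAt_digamma (by linarith)).differentiableAt)
  have hs : slope (Real.log ∘ Real.Gamma) (x - 1) x = Real.log (x - 1) := by
    rw [slope_def_field]
    simp only [Function.comp_apply]
    have : Real.Gamma x = (x - 1) * Real.Gamma (x - 1) := by
      have := Real.Gamma_add_one hx1.ne'
      simpa using this
    rw [this, Real.log_mul hx1.ne' (Real.Gamma_pos_of_pos hx1).ne']
    field_simp; ring
  rw [hs] at h
  exact h

lemma log_ratio_bounds {u : ℝ} (h0 : 0 ≤ u) (h1 : u ≤ 1/2) :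
    2*u ≤ Real.log (1+u) - Real.log (1-u) ∧
    Real.log (1+u) - Real.log (1-u) ≤ 2*u + u^3 := by
  have hd : ∀ v : ℝ, v ∈ Set.Icc (0:ℝ) (1/2) →
      HasDerivAt (fun w => Real.log (1+w) - Real.log (1-w)) ((1+v)⁻¹ + (1-v)⁻¹) v := by
    intro v hv
    obtain ⟨hv0, hv1⟩ := hv
    have hp : (0:ℝ) < 1 + v := by linarith
    have hm : (0:ℝ) < 1 - v := by linarith
    have d1 : HasDerivAt (fun w : ℝ => Real.log (1+w)) (1+v)⁻¹ v := by
      simpa [Function.comp_def] using (Real.hasDerivAt_log hp.ne').comp v ((hasDerivAt_id v).const_add 1)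
    have d2 : HasDerivAt (fun w : ℝ => Real.log (1-w)) (-(1-v)⁻¹) v := by
      simpa [Function.comp_def] using (Real.hasDerivAt_log hm.ne').comp v ((hasDerivAt_id v).const_sub 1)
    simpa [sub_neg_eq_add, Pi.sub_def] using d1.sub d2
  constructor
  · -- lower bound: f v = log(1+v)-log(1-v)-2v is monotone on Icc
    have hmono : MonotoneOn (fun w => Real.log (1+w) - Real.log (1-w) - 2*w)
        (Set.Icc (0:ℝ) (1/2)) := by
      apply monotoneOn_of_deriv_nonneg (convex_Icc _ _)
      · exact fun v hv => (((hd v hv).sub ((hasDerivAt_id v).const_mul 2)).continuousAt).continuousWithinAt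
      · intro v hv
        rw [interior_Icc] at hv
        exact (((hd v ⟨hv.1.le, hv.2.le⟩).sub ((hasDerivAt_id v).const_mul 2)).differentiableAt).differentiableWithinAt
      · intro v hv
        rw [interior_Icc] at hv
        obtain ⟨hv0, hv1⟩ := hv
        have hp : (0:ℝ) < 1 + v := by linarith
        have hm : (0:ℝ) < 1 - v := by linarith
        have hlin : HasDerivAt (fun w : ℝ => 2*w) 2 v := by
          simpa using (hasDerivAt_id v).const_mul 2
        have hD := ((hd v ⟨hv0.le, hv1.le⟩).sub hlin).deriv
        simp only [Pi.sub_def] at hD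
        rw [hD]
        have e1 : (1+v)⁻¹ = 1/(1+v) := by rw [one_div]
        have e2 : (1-v)⁻¹ = 1/(1-v) := by rw [one_div]
        rw [e1, e2, div_add_div _ _ hp.ne' hm.ne']
        rw [sub_nonneg, ← sub_nonneg]
        have : ((1-v) + (1+v)) / ((1+v)*(1-v)) - 2*1
            = (2*v^2) / ((1+v)*(1-v)) := by
          field_simp
          ring
        calc (0:ℝ) ≤ (2*v^2) / ((1+v)*(1-v)) := by positivity
          _ = _ := by rw [← this]; simp
    have := hmono (Set.left_mem_Icc.mpr (by norm_num)) ⟨h0, h1⟩ h0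
    simp only [Real.log_one] at this
    norm_num at this
    linarith [this]
  · -- upper bound: g v = 2v + v³ - (log(1+v)-log(1-v)) is monotone
    have hmono : MonotoneOn (fun w => 2*w + w^3 - (Real.log (1+w) - Real.log (1-w)))
        (Set.Icc (0:ℝ) (1/2)) := by
      have hpoly : ∀ v : ℝ, HasDerivAt (fun w : ℝ => 2*w + w^3) (2 + 3*v^2) v := by
        intro v
        have := ((hasDerivAt_id v).const_mul 2).add ((hasDerivAt_pow 3 v))
        simpa [Pi.add_def] using this
      apply monotoneOn_of_deriv_nonneg (convex_Icc _ _)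
      · exact fun v hv => (((hpoly v).sub (hd v hv)).continuousAt).continuousWithinAt
      · intro v hv
        rw [interior_Icc] at hv
        exact (((hpoly v).sub (hd v ⟨hv.1.le, hv.2.le⟩)).differentiableAt).differentiableWithinAt
      · intro v hv
        rw [interior_Icc] at hv
        obtain ⟨hv0, hv1⟩ := hv
        have hp : (0:ℝ) < 1 + v := by linarith
        have hm : (0:ℝ) < 1 - v := by linarith
        have hD := ((hpoly v).sub (hd v ⟨hv0.le, hv1.le⟩)).deriv
        simp only [Pi.sub_def] at hD
        rw [hD]
        have key : (1+v)⁻¹ + (1-v)⁻¹ ≤ 2 + 3*v^2 := by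
          rw [inv_eq_one_div, inv_eq_one_div, div_add_div _ _ hp.ne' hm.ne',
            div_le_iff₀ (by positivity)]
          have hv2 : v^2 ≤ 1/4 := by nlinarith
          nlinarith [mul_le_mul_of_nonneg_left hv2 (by positivity : (0:ℝ) ≤ 3*v^2)]
        linarith
    have := hmono (Set.left_mem_Icc.mpr (by norm_num)) ⟨h0, h1⟩ h0
    simp only [Real.log_one] at this
    norm_num at this
    linarith [this]

lemma midpoint_bounds {t : ℝ} (ht : 1 ≤ t) :
    1/t ≤ Real.log (t + 1/2) - Real.log (t - 1/2) ∧
    Real.log (t + 1/2) - Real.log (t - 1/2) ≤ 1/t + 1/(8*t^3) := by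
  have ht0 : (0:ℝ) < t := by linarith
  set u : ℝ := 1/(2*t) with hu
  have h0 : 0 ≤ u := by positivity
  have h1 : u ≤ 1/2 := by
    rw [hu, div_le_div_iff₀ (by positivity) (by norm_num)]
    linarith
  have e1 : 1 + u = (t + 1/2)/t := by rw [hu]; field_simp
  have e2 : 1 - u = (t - 1/2)/t := by rw [hu]; field_simp
  have hp : (0:ℝ) < t + 1/2 := by linarith
  have hm : (0:ℝ) < t - 1/2 := by linarith
  have key : Real.log (1+u) - Real.log (1-u)
      = Real.log (t + 1/2) - Real.log (t - 1/2) := by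
    rw [e1, e2, Real.log_div hp.ne' ht0.ne', Real.log_div hm.ne' ht0.ne']
    ring
  obtain ⟨hl, hr⟩ := log_ratio_bounds h0 h1
  rw [key] at hl hr
  have e3 : 2*u = 1/t := by rw [hu]; field_simp
  have e4 : u^3 = 1/(8*t^3) := by rw [hu]; field_simp; ring
  constructor
  · rw [← e3]; exact hl
  · rw [← e3, ← e4]; exact hr

lemma sum_cube_le {x : ℝ} (hx : 1 ≤ x) (n : ℕ) :
    ∑ k ∈ Finset.range n, 1/(x + k)^3 ≤ 2/x^2 := by
  have key : ∀ n : ℕ, ∑ k ∈ Finset.range n, 1/(x + k)^3 ≤ 2/x^2 - 2/(x+n)^2 := by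
    intro n
    induction n with
    | zero => simp
    | succ n ih =>
      rw [Finset.sum_range_succ]
      have ht : (1:ℝ) ≤ x + n := le_add_of_le_of_nonneg hx (Nat.cast_nonneg n)
      have ht0 : (0:ℝ) < x + n := by linarith
      have step : 1/(x+n)^3 ≤ 2/(x+n)^2 - 2/(x+(n+1:ℕ))^2 := by
        have hcast : (x + (n+1:ℕ) : ℝ) = (x + n) + 1 := by push_cast; ring
        rw [hcast, div_sub_div _ _ (by positivity) (by positivity),
          div_le_div_iff₀ (by positivity) (by positivity)]
        have h2 : (1:ℝ) ≤ (x+(n:ℝ))^2 := by nlinarith [mul_le_mul ht ht zero_le_one ht0.le]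
        have h3 : (0:ℝ) ≤ (x+(n:ℝ))^2 * (3*(x+(n:ℝ))^2 - 1) :=
          mul_nonneg (sq_nonneg _) (by linarith)
        nlinarith [h3]
      linarith
  have hx0 : (0:ℝ) < x := by linarith
  have : (0:ℝ) ≤ 2/(x+n)^2 := by positivity
  linarith [key n]

lemma key_bounds {x : ℝ} (hx : 1 < x) (n : ℕ) (hn : 1 ≤ n) :
    -(1/(2*n)) ≤ digamma x - Real.log (x - 1/2) ∧
    digamma x - Real.log (x - 1/2) ≤ 1/(2*n) + 1/(4*x^2) := by
  have hx0 : (0:ℝ) < x := by linarith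
  have hn0 : (0:ℝ) < n := by exact_mod_cast hn
  set f : ℕ → ℝ := fun k => Real.log (x + k - 1/2) with hf
  set S : ℝ := ∑ k ∈ Finset.range n, 1/(x + k) with hS
  -- telescoping
  have htel : ∑ k ∈ Finset.range n, (f (k+1) - f k) = f n - f 0 :=
    Finset.sum_range_sub f n
  have hf0 : f 0 = Real.log (x - 1/2) := by simp [hf]
  -- termwise bounds
  have hterm : ∀ k : ℕ, 0 ≤ (f (k+1) - f k) - 1/(x+k) ∧
      (f (k+1) - f k) - 1/(x+k) ≤ 1/(8*(x+k)^3) := by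
    intro k
    have htk : (1:ℝ) ≤ x + k := by
      have : (0:ℝ) ≤ k := Nat.cast_nonneg k
      linarith
    obtain ⟨h1, h2⟩ := midpoint_bounds htk
    have e1 : f (k+1) = Real.log ((x+k) + 1/2) := by
      simp only [hf]
      norm_num
      ring_nf
    have e2 : f k = Real.log ((x+k) - 1/2) := rfl
    rw [e1, e2]
    constructor
    · linarith
    · linarith
  -- error sum bounds
  have hE0 : 0 ≤ (f n - f 0) - S := by
    rw [← htel, hS, ← Finset.sum_sub_distrib]
    apply Finset.sum_nonneg
    intro k _
    exact (hterm k).1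
  have hE1 : (f n - f 0) - S ≤ 1/(4*x^2) := by
    rw [← htel, hS, ← Finset.sum_sub_distrib]
    calc ∑ k ∈ Finset.range n, ((f (k+1) - f k) - 1/(x+k))
        ≤ ∑ k ∈ Finset.range n, 1/(8*(x+k)^3) := by
          apply Finset.sum_le_sum
          intro k _
          exact (hterm k).2
      _ = (1/8) * ∑ k ∈ Finset.range n, 1/(x+k)^3 := by
          rw [Finset.mul_sum]
          apply Finset.sum_congr rfl
          intro k _
          rw [div_mul_div_comm, one_mul]
      _ ≤ (1/8) * (2/x^2) := by
          have := sum_cube_le hx.le n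
          linarith
      _ = 1/(4*x^2) := by ring
  -- digamma recurrence
  have hrec : digamma x = digamma (x + n) - S := by
    rw [digamma_add_nat hx0 n]; ring
  -- sandwich for digamma (x+n)
  have hxn1 : (1:ℝ) < x + n := by linarith
  have hub : digamma (x + n) ≤ Real.log (x + n) := digamma_le_log (by linarith)
  have hlb : Real.log (x + n - 1) ≤ digamma (x + n) := log_le_digamma hxn1
  -- log gaps
  have hgap1 : Real.log (x + n) - Real.log (x + n - 1/2) ≤ 1/(2*n) := by
    have hm : (0:ℝ) < x + n - 1/2 := by linarith
    have := Real.log_le_sub_one_of_pos (show (0:ℝ) < (x+n)/(x+n-1/2) by positivity)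
    rw [Real.log_div (by linarith : (x+n:ℝ) ≠ 0) hm.ne'] at this
    have h2 : (x+n)/(x+n-1/2) - 1 = (1/2)/(x+n-1/2) := by
      rw [div_sub_one hm.ne']
      congr 1
      ring
    have h3 : (1/2)/(x+n-1/2) ≤ 1/(2*n) := by
      rw [div_le_div_iff₀ hm (by positivity)]
      linarith
    linarith
  have hgap2 : Real.log (x + n - 1/2) - Real.log (x + n - 1) ≤ 1/(2*n) := by
    have hm : (0:ℝ) < x + n - 1 := by linarith
    have hm2 : (0:ℝ) < x + n - 1/2 := by linarith
    have := Real.log_le_sub_one_of_pos (show (0:ℝ) < (x+n-1/2)/(x+n-1) by positivity)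
    rw [Real.log_div hm2.ne' hm.ne'] at this
    have h2 : (x+n-1/2)/(x+n-1) - 1 = (1/2)/(x+n-1) := by
      rw [div_sub_one hm.ne']
      congr 1
      ring
    have h3 : (1/2)/(x+n-1) ≤ 1/(2*n) := by
      rw [div_le_div_iff₀ hm (by positivity)]
      linarith
    linarith
  have hfn : f n = Real.log (x + n - 1/2) := by simp only [hf]
  constructor
  · -- lower
    have : digamma x - Real.log (x - 1/2)
        = (digamma (x+n) - Real.log (x+n-1/2)) + ((f n - f 0) - S) := by
      rw [hrec, hfn, hf0]; ring
    rw [this]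
    have : -(1/(2*n)) ≤ digamma (x+n) - Real.log (x+n-1/2) := by linarith
    linarith
  · have : digamma x - Real.log (x - 1/2)
        = (digamma (x+n) - Real.log (x+n-1/2)) + ((f n - f 0) - S) := by
      rw [hrec, hfn, hf0]; ring
    rw [this]
    have : digamma (x+n) - Real.log (x+n-1/2) ≤ 1/(2*n) := by linarith
    linarith

lemma sandwich_aux {D b : ℝ} (h : ∀ ε : ℝ, 0 < ε → -ε ≤ D ∧ D ≤ ε + b) :
    0 ≤ D ∧ D ≤ b := by
  constructor
  · by_contra hc
    push_neg at hc
    have := (h (-D/2) (by linarith)).1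
    linarith
  · by_contra hc
    push_neg at hc
    have := (h ((D - b)/2) (by linarith)).2
    linarith

theorem digamma_eq_log_sub_half_bigO :
    ∃ C : ℝ, 0 < C ∧ ∀ x : ℝ, 1 < x →
      |digamma x - Real.log (x - 1 / 2)| ≤ C / x ^ 2 := by
  refine ⟨1, one_pos, fun x hx => ?_⟩
  have hx0 : (0:ℝ) < x := by linarith
  have hforall : ∀ ε : ℝ, 0 < ε →
      -ε ≤ digamma x - Real.log (x - 1/2) ∧
      digamma x - Real.log (x - 1/2) ≤ ε + 1/(4*x^2) := by
    intro ε hε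
    obtain ⟨n, hn⟩ := exists_nat_gt (1/(2*ε))
    have hn1 : 1 ≤ n := by
      rcases Nat.eq_zero_or_pos n with h | h
      · subst h
        norm_num at hn
        have : (0:ℝ) < 1/(2*ε) := by positivity
        exfalso
        rw [one_div, mul_inv] at this
        linarith
      · exact h
    have hn0 : (0:ℝ) < n := by exact_mod_cast hn1
    have hsmall : 1/(2*(n:ℝ)) ≤ ε := by
      rw [div_le_iff₀ (by positivity)]
      rw [div_lt_iff₀ (by positivity)] at hn
      nlinarith
    obtain ⟨h1, h2⟩ := key_bounds hx n hn1
    exact ⟨by linarith, by linarith⟩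
  obtain ⟨hDnn, hDle⟩ := sandwich_aux hforall
  rw [abs_of_nonneg hDnn]
  have h14 : 1/(4*x^2) ≤ 1/x^2 := by
    rw [div_le_div_iff₀ (by positivity) (by positivity)]
    nlinarith
  calc digamma x - Real.log (x - 1/2) ≤ 1/(4*x^2) := hDle
    _ ≤ 1/x^2 := h14
end

section
/- Let $n \ge 2$ and let $\hat{a}_1,\dots,\hat{a}_n, \hat{b}_1,\dots,\hat{b}_n > 0$. For each fixed $j$, we have $\frac{1}{n-1}\sum_{s \ne j} \psi'(\hat{a}_j + \hat{b}_s)\left(\frac{1}{\psi'(\hat{a}_j)} + \frac{1}{\psi'(\hat{b}_s)}\right) < 1$. -/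
open Finset

/-- The trigamma function `ψ'`. -/
noncomputable def trigamma : ℝ → ℝ := deriv digamma

namespace TrigammaAux

open Filter Topology Set


/-- The trigamma series. -/
noncomputable def T (x : ℝ) : ℝ := ∑' n : ℕ, 1/(x+n)^2

lemma tendsto_aux (c : ℝ) : Tendsto (fun n : ℕ => (c + n)) atTop atTop :=
  tendsto_atTop_add_const_left _ c tendsto_natCast_atTop_atTop

lemma tendsto_inv_shift (c : ℝ) : Tendsto (fun k : ℕ => 1/(c+k)) atTop (𝓝 0) := by
  simp only [one_div]
  exact (tendsto_aux c).inv_tendsto_atTop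

lemma tendsto_inv_sq_shift {c : ℝ} (hc : 0 < c) :
    Tendsto (fun k : ℕ => 1/(2*(c+k)^2)) atTop (𝓝 0) := by
  have hg := (tendsto_inv_shift c).const_mul (1/(2*c))
  rw [mul_zero] at hg
  apply squeeze_zero (fun k => by positivity) (fun k => ?_) hg
  have hk : (0:ℝ) ≤ k := Nat.cast_nonneg k
  have h1 : (1:ℝ)/(2*(c+k)^2) ≤ 1/(2*c*(c+k)) :=
    one_div_le_one_div_of_le (by positivity) (by nlinarith)
  calc (1:ℝ)/(2*(c+k)^2) ≤ 1/(2*c*(c+k)) := h1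
  _ = 1/(2*c)*(1/(c+k)) := by rw [div_mul_div_comm, one_mul]

lemma summable_inv_sq {x : ℝ} (hx : 0 < x) : Summable (fun n : ℕ => 1/(x+n)^2) := by
  have h0 : Summable (fun n : ℕ => 1/((n:ℝ))^2) := Real.summable_one_div_nat_pow.mpr (by norm_num)
  have h1 : Summable (fun n : ℕ => 1/(((n+1:ℕ)):ℝ)^2) :=
    (summable_nat_add_iff (f := fun n : ℕ => 1/((n:ℝ))^2) 1).mpr h0
  rw [← summable_nat_add_iff 1]
  apply Summable.of_nonneg_of_le (fun n => by positivity) (fun n => ?_) h1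
  apply one_div_le_one_div_of_le (by positivity)
  have h2 : ((n+1:ℕ):ℝ) ≤ x + ((n+1:ℕ):ℝ) := by linarith
  have h3 : (0:ℝ) ≤ ((n+1:ℕ):ℝ) := by positivity
  nlinarith

lemma summable_inv_cube {x : ℝ} (hx : 0 < x) : Summable (fun n : ℕ => 1/(x+n)^3) := by
  apply Summable.of_nonneg_of_le (fun n => by positivity) (fun n => ?_)
    ((summable_inv_sq hx).mul_left (1/x))
  have hn : (0:ℝ) ≤ (n:ℝ) := Nat.cast_nonneg n
  have hxn : 0 < x + (n:ℝ) := by positivity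
  rw [div_mul_div_comm, one_mul]
  apply one_div_le_one_div_of_le (by positivity)
  nlinarith [sq_nonneg (x+(n:ℝ))]

/-- telescoping sum of a decreasing-to-zero sequence -/
lemma hasSum_telescope {g : ℕ → ℝ} (hmono : ∀ k, g (k+1) ≤ g k)
    (hlim : Tendsto g atTop (𝓝 0)) : HasSum (fun k => g k - g (k+1)) (g 0) := by
  rw [hasSum_iff_tendsto_nat_of_nonneg (fun k => by linarith [hmono k])]
  have e : ∀ n, ∑ i ∈ Finset.range n, (g i - g (i+1)) = g 0 - g n :=
    fun n => Finset.sum_range_sub' g n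
  simp_rw [e]
  simpa using tendsto_const_nhds.sub hlim

lemma tsum_telescope_le {g f : ℕ → ℝ} (hf : Summable f)
    (hmono : ∀ k, g (k+1) ≤ g k) (hlim : Tendsto g atTop (𝓝 0))
    (hle : ∀ k, g k - g (k+1) ≤ f k) : g 0 ≤ ∑' k, f k := by
  have htel := hasSum_telescope hmono hlim
  rw [← htel.tsum_eq]
  exact Summable.tsum_le_tsum hle htel.summable hf

lemma le_tsum_telescope {g f : ℕ → ℝ} (hf : Summable f)
    (hmono : ∀ k, g (k+1) ≤ g k) (hlim : Tendsto g atTop (𝓝 0))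
    (hle : ∀ k, f k ≤ g k - g (k+1)) : ∑' k, f k ≤ g 0 := by
  have htel := hasSum_telescope hmono hlim
  rw [← htel.tsum_eq]
  exact Summable.tsum_le_tsum hle hf htel.summable

lemma T_shift (x : ℝ) (hx : 0 < x) : T x = 1/x^2 + ∑' n : ℕ, 1/(x+1+n)^2 := by
  rw [T, Summable.tsum_eq_zero_add (summable_inv_sq hx)]
  congr 1
  · norm_num
  · exact tsum_congr fun n => by push_cast; ring_nf

lemma tail_upper {x : ℝ} (hx : 0 < x) : (∑' n : ℕ, 1/(x+1+n)^2) ≤ 1/(x+1/2) := by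
  have key : (∑' n : ℕ, 1/(x+1+n)^2) ≤ (fun k : ℕ => 1/(x+1/2+k)) 0 := by
    apply le_tsum_telescope (g := fun k : ℕ => 1/(x+1/2+k))
      (summable_inv_sq (by linarith : (0:ℝ) < x+1))
    · intro k
      apply one_div_le_one_div_of_le (by positivity)
      push_cast; linarith
    · exact tendsto_inv_shift _
    · intro k
      have hk : (0:ℝ) ≤ k := Nat.cast_nonneg k
      have h1 : (1:ℝ)/(x+1/2+k) - 1/(x+1/2+(k+1:ℕ)) = 1/((x+1/2+k)*(x+1/2+k+1)) := by
        push_cast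
        rw [div_sub_div _ _ (by positivity) (by positivity)]
        congr 1 <;> ring
      rw [h1]
      apply one_div_le_one_div_of_le (by positivity)
      nlinarith
  simpa using key

lemma tail_lower {x : ℝ} (hx : 0 < x) :
    1/(x+1) + 1/(2*(x+1)^2) ≤ (∑' n : ℕ, 1/(x+1+n)^2) := by
  have key : (fun k : ℕ => 1/(x+1+k) + 1/(2*(x+1+k)^2)) 0 ≤ (∑' n : ℕ, 1/(x+1+n)^2) := by
    apply tsum_telescope_le (g := fun k : ℕ => 1/(x+1+k) + 1/(2*(x+1+k)^2))
      (summable_inv_sq (by linarith : (0:ℝ) < x+1))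
    · intro k
      have hk : (0:ℝ) ≤ k := Nat.cast_nonneg k
      push_cast
      have h1 : (1:ℝ)/(x+1+(k+1)) ≤ 1/(x+1+k) := by
        apply one_div_le_one_div_of_le (by positivity); linarith
      have h2 : (1:ℝ)/(2*(x+1+(k+1))^2) ≤ 1/(2*(x+1+k)^2) := by
        apply one_div_le_one_div_of_le (by positivity); nlinarith
      linarith
    · have hl := (tendsto_inv_shift (x+1)).add (tendsto_inv_sq_shift (show (0:ℝ) < x+1 by linarith))
      simpa using hl
    · intro k
      have hk : (0:ℝ) ≤ k := Nat.cast_nonneg k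
      push_cast
      set u : ℝ := x+1+k with hu
      have hu0 : (0:ℝ) < u := by rw [hu]; positivity
      have e1 : x+1+((k:ℝ)+1) = u + 1 := by rw [hu]; ring
      rw [e1]
      have hu1 : (0:ℝ) < u + 1 := by linarith
      have hAM : 1/(u*(u+1)) ≤ 1/(2*u^2) + 1/(2*(u+1)^2) := by
        rw [div_add_div _ _ (by positivity) (by positivity),
          div_le_div_iff₀ (by positivity) (by positivity)]
        nlinarith [sq_nonneg u, sq_nonneg (u+1), mul_pos hu0 hu1]
      have h1u : 1/u - 1/(u+1) = 1/(u*(u+1)) := by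
        rw [div_sub_div _ _ (by positivity) (by positivity)]
        congr 1 <;> ring
      have hdb : (1:ℝ)/u^2 = 2*(1/(2*u^2)) := by
        rw [mul_one_div, div_eq_div_iff (by positivity) (by positivity)]
        ring
      linarith [hAM, h1u]
  simpa using key

lemma T_lower {x : ℝ} (hx : 0 < x) : 1/x^2 + 1/(x+1) + 1/(2*(x+1)^2) ≤ T x := by
  rw [T_shift x hx]
  linarith [tail_lower hx]

lemma T_upper {x : ℝ} (hx : 0 < x) : T x ≤ 1/x^2 + 1/(x+1/2) := by
  rw [T_shift x hx]
  linarith [tail_upper hx]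

lemma T_pos {x : ℝ} (hx : 0 < x) : 0 < T x := by
  have := T_lower hx
  have h1 : (0:ℝ) < 1/x^2 + 1/(x+1) + 1/(2*(x+1)^2) := by positivity
  linarith

lemma T_gt {x : ℝ} (hx : 0 < x) : 1/x^2 < T x := by
  have := T_lower hx
  have h1 : (0:ℝ) < 1/(x+1) + 1/(2*(x+1)^2) := by positivity
  linarith

lemma T_anti {x y : ℝ} (hx : 0 < x) (hxy : x ≤ y) : T y ≤ T x := by
  apply Summable.tsum_le_tsum _ (summable_inv_sq (hx.trans_le hxy)) (summable_inv_sq hx)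
  intro k
  have hk : (0:ℝ) ≤ k := Nat.cast_nonneg k
  apply one_div_le_one_div_of_le (by positivity)
  nlinarith

lemma cube_lower {s : ℝ} (hs : 0 < s) : 1/(2*s^2) ≤ ∑' n : ℕ, 1/(s+n)^3 := by
  have key : (fun k : ℕ => 1/(2*(s+k)^2)) 0 ≤ ∑' n : ℕ, 1/(s+n)^3 := by
    apply tsum_telescope_le (g := fun k : ℕ => 1/(2*(s+k)^2)) (summable_inv_cube hs)
    · intro k
      have hk : (0:ℝ) ≤ k := Nat.cast_nonneg k
      apply one_div_le_one_div_of_le (by positivity)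
      push_cast; nlinarith
    · exact tendsto_inv_sq_shift hs
    · intro k
      have hk : (0:ℝ) ≤ k := Nat.cast_nonneg k
      push_cast
      set u : ℝ := s+k with hu
      have hu0 : (0:ℝ) < u := by rw [hu]; positivity
      have e1 : s+((k:ℝ)+1) = u + 1 := by rw [hu]; ring
      rw [e1]
      have hu1 : (0:ℝ) < u + 1 := by linarith
      rw [div_sub_div _ _ (by positivity) (by positivity),
        div_le_div_iff₀ (by positivity) (by positivity)]
      nlinarith [pow_pos hu0 2, pow_pos hu0 3, pow_pos hu0 4, mul_pos hu0 hu1]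
  have e0 : (fun k : ℕ => 1/(2*(s+k)^2)) 0 = 1/(2*s^2) := by norm_num
  linarith [key, e0.symm.le]

lemma T_gap {x y : ℝ} (hx : 0 < x) (hy : 0 < y) : x/(x+y)^2 ≤ T y - T (x+y) := by
  have hspos : (0:ℝ) < x + y := by positivity
  have h1 : T y - T (x+y) = ∑' k : ℕ, (1/(y+k)^2 - 1/(x+y+k)^2) := by
    rw [T, T, ← Summable.tsum_sub (summable_inv_sq hy) (summable_inv_sq hspos)]
  rw [h1]
  have h2 : (∑' k : ℕ, 2*x*(1/(x+y+k)^3)) ≤ ∑' k : ℕ, (1/(y+k)^2 - 1/(x+y+k)^2) := by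
    apply Summable.tsum_le_tsum _ ((summable_inv_cube hspos).mul_left _)
      ((summable_inv_sq hy).sub (summable_inv_sq hspos))
    intro k
    have hk : (0:ℝ) ≤ k := Nat.cast_nonneg k
    have hyk : (0:ℝ) < y+k := by positivity
    have hsk : (0:ℝ) < x+y+k := by positivity
    rw [div_sub_div _ _ (by positivity) (by positivity), mul_one_div,
      div_le_div_iff₀ (by positivity) (by positivity)]
    nlinarith [mul_pos hyk hsk, mul_pos hx hyk, mul_pos hx hsk,
      mul_pos (mul_pos hx hyk) hsk, mul_pos (mul_pos hyk hyk) hsk,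
      mul_pos (mul_pos (mul_pos hx hyk) hyk) hsk, mul_pos (mul_pos (mul_pos hx hx) hyk) hsk]
  have h3 : x/(x+y)^2 ≤ ∑' k : ℕ, 2*x*(1/(x+y+k)^3) := by
    rw [tsum_mul_left]
    have hc := cube_lower hspos
    calc x/(x+y)^2 = 2*x*(1/(2*(x+y)^2)) := by
          rw [mul_one_div, div_eq_div_iff (by positivity) (by positivity)]; ring
    _ ≤ 2*x*∑' n : ℕ, 1/(x+y+n)^3 := by
          apply mul_le_mul_of_nonneg_left hc (by positivity)
  linarith



set_option maxHeartbeats 1600000 in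
lemma G_pos (x y : ℝ) (hx : 0 < x) (hxy : x ≤ y)
    (hC : y^4 ≤ x*(x+y)^2*(y+1)^2) :
    0 < 2*x^2*(2*y+1)*(2*y^3+5*y^2+4*y+2)*(2*(x+y)^2+2*(x+y)+1)
      + 2*y^2*(2*x+1)*(2*x^3+5*x^2+4*x+2)*(2*(x+y)^2+2*(x+y)+1)
      + (4*x*y*((x+y)^2+(x+y)+1) - (x+y)^2)*(2*x^3+5*x^2+4*x+2)*(2*y^3+5*y^2+4*y+2) := by
  have hy : 0 < y := hx.trans_le hxy
  rcases le_or_gt 0 (4*x*y*((x+y)^2+(x+y)+1) - (x+y)^2) with hM | hM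
  · -- all three summands nonneg, first positive
    have h1 : 0 < 2*x^2*(2*y+1)*(2*y^3+5*y^2+4*y+2)*(2*(x+y)^2+2*(x+y)+1) := by positivity
    have h2 : 0 < 2*y^2*(2*x+1)*(2*x^3+5*x^2+4*x+2)*(2*(x+y)^2+2*(x+y)+1) := by positivity
    have h3 : 0 ≤ (4*x*y*((x+y)^2+(x+y)+1) - (x+y)^2)*(2*x^3+5*x^2+4*x+2)*(2*y^3+5*y^2+4*y+2) :=
      mul_nonneg (mul_nonneg hM (by positivity)) (by positivity)
    linarith
  rcases le_or_gt y (4*x) with h4 | h4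
  · -- y ≤ 4x
    have h1 : 0 < 2*x^2*(2*y+1)*(2*y^3+5*y^2+4*y+2)*(2*(x+y)^2+2*(x+y)+1) := by positivity
    have hMa : (x+y)^2 - 4*x*y*((x+y)^2+(x+y)+1) ≤ y^2 := by
      nlinarith [sq_nonneg (x-y), mul_pos hx hy]
    have hΔ : 0 ≤ 2*(2*x+1)*(2*(x+y)^2+2*(x+y)+1) - (2*y^3+5*y^2+4*y+2) := by
      nlinarith [mul_pos hx hy, mul_pos (mul_pos hx hy) hy, sq_nonneg y]
    have hPx : 0 < 2*x^3+5*x^2+4*x+2 := by positivity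
    have hPy : 0 < 2*y^3+5*y^2+4*y+2 := by positivity
    have key : 0 ≤ y^2*(2*x^3+5*x^2+4*x+2)*(2*(2*x+1)*(2*(x+y)^2+2*(x+y)+1) - (2*y^3+5*y^2+4*y+2)) :=
      mul_nonneg (mul_nonneg (sq_nonneg y) hPx.le) hΔ
    nlinarith [mul_le_mul_of_nonneg_right (mul_le_mul_of_nonneg_right hMa hPx.le) hPy.le, key]
  · -- 4x < y : the constrained region
    have hs : 0 < x + y := by linarith
    have h41 : 4*x*y < 1 := by
      have h1 : 4*x*y*((x+y)^2+(x+y)+1) < 1*((x+y)^2+(x+y)+1) := by nlinarith [sq_nonneg (x+y)]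
      exact lt_of_mul_lt_mul_right h1 (by positivity)
    have hxlb : 16*y^2 ≤ 25*x*(y+1)^2 := by
      have h2 : (x+y)^2 ≤ 25*y^2/16 := by nlinarith
      have h3 : 16*y^4 ≤ 25*x*(y+1)^2*y^2 := by
        nlinarith [mul_le_mul_of_nonneg_left h2 hx.le, mul_pos hx hy, sq_nonneg (y+1)]
      nlinarith [h3, mul_pos hy hy]
    have hyub : 64*y^3 < 25*(y+1)^2 := by nlinarith [mul_le_mul_of_nonneg_left hxlb hy.le]
    have hy13 : y < 13/10 := by nlinarith [hyub, mul_pos hy hy, mul_pos (mul_pos hy hy) hy]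
    have ha : (0:ℝ) ≤ 13/10 - y := by linarith
    have hf1 : 0 ≤ (25*x*(y+1)^2 - 16*y^2)*(8*y+48*y^2+92*y^3) :=
      mul_nonneg (by linarith) (by positivity)
    have hf2 : 0 ≤ 128*y^3+768*y^4+1472*y^5 - (100*y^7+250*y^6+200*y^5+50*y^4) := by
      nlinarith [mul_nonneg ha (pow_nonneg hy.le 2), mul_nonneg ha (pow_nonneg hy.le 3),
        mul_nonneg ha (pow_nonneg hy.le 4), mul_nonneg ha (pow_nonneg hy.le 5),
        mul_nonneg ha (pow_nonneg hy.le 6), pow_nonneg hy.le 3, pow_nonneg hy.le 4]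
    have hf3 : 0 ≤ 25*(y+1)^2*(2*x*y^3 - 2*x^4) := by
      have : 0 ≤ 2*x*y^3 - 2*x^4 := by
        nlinarith [mul_nonneg (sub_nonneg.2 hxy) (by positivity : (0:ℝ) ≤ y^2+x*y+x^2), hx.le]
      exact mul_nonneg (by positivity) this
    have hf4 : 0 ≤ 25*(y+1)^2*(4*x*y^4 - 4*x^5) := by
      have hy4 : 0 ≤ y^4 - x^4 := by
        nlinarith [mul_nonneg (sub_nonneg.2 hxy) (by positivity : (0:ℝ) ≤ y^3+x*y^2+x^2*y+x^3)]
      exact mul_nonneg (by positivity) (by nlinarith [mul_nonneg hx.le hy4])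
    have hstrict : 0 < x^2*y := by positivity
    have hCpos : (0:ℝ) < 25*(y+1)^2 := by positivity
    have hbig : 0 < 25*(y+1)^2*(2*x^2*(2*y+1)*(2*y^3+5*y^2+4*y+2)*(2*(x+y)^2+2*(x+y)+1)
        + 2*y^2*(2*x+1)*(2*x^3+5*x^2+4*x+2)*(2*(x+y)^2+2*(x+y)+1)
        + (4*x*y*((x+y)^2+(x+y)+1) - (x+y)^2)*(2*x^3+5*x^2+4*x+2)*(2*y^3+5*y^2+4*y+2)) := by
      linarith [hf1, hf2, hf3, hf4, hstrict,
        mul_nonneg (pow_nonneg hx.le 1) (pow_nonneg hy.le 3),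
    mul_nonneg (pow_nonneg hx.le 1) (pow_nonneg hy.le 4),
    mul_nonneg (pow_nonneg hx.le 1) (pow_nonneg hy.le 5),
    mul_nonneg (pow_nonneg hx.le 1) (pow_nonneg hy.le 6),
    mul_nonneg (pow_nonneg hx.le 1) (pow_nonneg hy.le 7),
    mul_nonneg (pow_nonneg hx.le 1) (pow_nonneg hy.le 8),
    mul_nonneg (pow_nonneg hx.le 2) (pow_nonneg hy.le 1),
    mul_nonneg (pow_nonneg hx.le 2) (pow_nonneg hy.le 2),
    mul_nonneg (pow_nonneg hx.le 2) (pow_nonneg hy.le 3),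
    mul_nonneg (pow_nonneg hx.le 2) (pow_nonneg hy.le 4),
    mul_nonneg (pow_nonneg hx.le 2) (pow_nonneg hy.le 5),
    mul_nonneg (pow_nonneg hx.le 2) (pow_nonneg hy.le 6),
    mul_nonneg (pow_nonneg hx.le 2) (pow_nonneg hy.le 7),
    mul_nonneg (pow_nonneg hx.le 2) (pow_nonneg hy.le 8),
    mul_nonneg (pow_nonneg hx.le 3) (pow_nonneg hy.le 1),
    mul_nonneg (pow_nonneg hx.le 3) (pow_nonneg hy.le 2),
    mul_nonneg (pow_nonneg hx.le 3) (pow_nonneg hy.le 3),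
    mul_nonneg (pow_nonneg hx.le 3) (pow_nonneg hy.le 4),
    mul_nonneg (pow_nonneg hx.le 3) (pow_nonneg hy.le 5),
    mul_nonneg (pow_nonneg hx.le 3) (pow_nonneg hy.le 6),
    mul_nonneg (pow_nonneg hx.le 3) (pow_nonneg hy.le 7),
    mul_nonneg (pow_nonneg hx.le 3) (pow_nonneg hy.le 8),
    mul_nonneg (pow_nonneg hx.le 4) (pow_nonneg hy.le 1),
    mul_nonneg (pow_nonneg hx.le 4) (pow_nonneg hy.le 2),
    mul_nonneg (pow_nonneg hx.le 4) (pow_nonneg hy.le 3),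
    mul_nonneg (pow_nonneg hx.le 4) (pow_nonneg hy.le 4),
    mul_nonneg (pow_nonneg hx.le 4) (pow_nonneg hy.le 5),
    mul_nonneg (pow_nonneg hx.le 4) (pow_nonneg hy.le 6),
    mul_nonneg (pow_nonneg hx.le 4) (pow_nonneg hy.le 7),
    mul_nonneg (pow_nonneg hx.le 4) (pow_nonneg hy.le 8),
    mul_nonneg (pow_nonneg hx.le 5) (pow_nonneg hy.le 1),
    mul_nonneg (pow_nonneg hx.le 5) (pow_nonneg hy.le 2),
    mul_nonneg (pow_nonneg hx.le 5) (pow_nonneg hy.le 3),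
    mul_nonneg (pow_nonneg hx.le 5) (pow_nonneg hy.le 4),
    mul_nonneg (pow_nonneg hx.le 5) (pow_nonneg hy.le 5),
    mul_nonneg (pow_nonneg hx.le 5) (pow_nonneg hy.le 6),
    mul_nonneg (pow_nonneg hx.le 5) (pow_nonneg hy.le 7),
    mul_nonneg (pow_nonneg hx.le 6) (pow_nonneg hy.le 1),
    mul_nonneg (pow_nonneg hx.le 6) (pow_nonneg hy.le 2),
    mul_nonneg (pow_nonneg hx.le 6) (pow_nonneg hy.le 3),
    mul_nonneg (pow_nonneg hx.le 6) (pow_nonneg hy.le 4),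
    mul_nonneg (pow_nonneg hx.le 6) (pow_nonneg hy.le 5),
    mul_nonneg (pow_nonneg hx.le 6) (pow_nonneg hy.le 6)]
    exact (mul_pos_iff_of_pos_left hCpos).mp hbig

set_option maxHeartbeats 1600000 in
lemma PI (x y : ℝ) (hx : 0 < x) (hxy : x ≤ y) (hC : y^4 ≤ x*(x+y)^2*(y+1)^2) :
    2*x^2*(x+1)^2/(2*x^3+5*x^2+4*x+2) + 2*y^2*(y+1)^2/(2*y^3+5*y^2+4*y+2)
      < (x+y)^2*(2*(x+y)+1)/(2*(x+y)^2+2*(x+y)+1) := by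
  have hy : 0 < y := hx.trans_le hxy
  have hPx : (0:ℝ) < 2*x^3+5*x^2+4*x+2 := by positivity
  have hPy : (0:ℝ) < 2*y^3+5*y^2+4*y+2 := by positivity
  have hQ : (0:ℝ) < 2*(x+y)^2+2*(x+y)+1 := by positivity
  have hG := G_pos x y hx hxy hC
  have hiden : (x+y)^2*(2*(x+y)+1)/(2*(x+y)^2+2*(x+y)+1)
      - (2*x^2*(x+1)^2/(2*x^3+5*x^2+4*x+2) + 2*y^2*(y+1)^2/(2*y^3+5*y^2+4*y+2))
      = (2*x^2*(2*y+1)*(2*y^3+5*y^2+4*y+2)*(2*(x+y)^2+2*(x+y)+1)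
      + 2*y^2*(2*x+1)*(2*x^3+5*x^2+4*x+2)*(2*(x+y)^2+2*(x+y)+1)
      + (4*x*y*((x+y)^2+(x+y)+1) - (x+y)^2)*(2*x^3+5*x^2+4*x+2)*(2*y^3+5*y^2+4*y+2))
        / ((2*x+1)*(2*y+1)*(2*x^3+5*x^2+4*x+2)*(2*y^3+5*y^2+4*y+2)*(2*(x+y)^2+2*(x+y)+1)) := by
    field_simp
    ring
  have hpos : 0 < (x+y)^2*(2*(x+y)+1)/(2*(x+y)^2+2*(x+y)+1)
      - (2*x^2*(x+1)^2/(2*x^3+5*x^2+4*x+2) + 2*y^2*(y+1)^2/(2*y^3+5*y^2+4*y+2)) := by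
    rw [hiden]; positivity
  linarith



/-- summand of the digamma series -/
noncomputable def dig (k : ℕ) (z : ℝ) : ℝ := 1/(k+1) - 1/(z+(k+1))

/-- the digamma function, as an explicit series -/
noncomputable def D (z : ℝ) : ℝ :=
  -Real.eulerMascheroniConstant - 1/z + ∑' k : ℕ, dig k z

lemma dig_nonneg {k : ℕ} {z : ℝ} (hz : 0 < z) : 0 ≤ dig k z := by
  rw [dig, sub_nonneg]
  apply one_div_le_one_div_of_le (by positivity)
  linarith

lemma dig_le {k : ℕ} {z : ℝ} (hz : 0 < z) : dig k z ≤ z * (1/(1+(k:ℝ))^2) := by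
  rw [dig]
  have hk : (0:ℝ) ≤ k := Nat.cast_nonneg k
  rw [div_sub_div _ _ (by positivity) (by positivity), mul_one_div,
    div_le_div_iff₀ (by positivity) (by positivity)]
  nlinarith [mul_pos hz (by positivity : (0:ℝ) < (k:ℝ)+1), sq_nonneg ((k:ℝ)+1)]

lemma summable_dig {z : ℝ} (hz : 0 < z) : Summable (fun k => dig k z) := by
  apply Summable.of_nonneg_of_le (fun k => dig_nonneg hz) (fun k => dig_le hz)
    (((summable_inv_sq one_pos)).mul_left z)

lemma hasDerivAt_dig (k : ℕ) {z : ℝ} (hz : 0 < z) :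
    HasDerivAt (dig k) (1/(z+(k+1))^2) z := by
  have hk : (0:ℝ) ≤ k := Nat.cast_nonneg k
  have hne : z + ((k:ℝ)+1) ≠ 0 := by positivity
  have h1 : HasDerivAt (fun w : ℝ => w + ((k:ℝ)+1)) 1 z := (hasDerivAt_id z).add_const _
  have h2 := (h1.inv hne)
  have h3 := h2.const_sub (1/((k:ℝ)+1))
  have e : dig k = fun x => 1 / ((k:ℝ) + 1) - (fun w => w + ((k:ℝ)+1))⁻¹ x := by
    funext w
    simp [dig, one_div]
  rw [e]
  exact h3.congr_deriv (by ring)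

/-- `n`-th digamma approximant (derivative of `logGammaSeq · n`). -/
noncomputable def d1 (n : ℕ) (z : ℝ) : ℝ :=
  (Real.log n - harmonic n) - 1/z + ∑ k ∈ Finset.range n, dig k z

lemma harmonic_cast (n : ℕ) : ((harmonic n : ℚ) : ℝ) = ∑ k ∈ Finset.range n, 1/((k:ℝ)+1) := by
  rw [harmonic]
  push_cast
  apply Finset.sum_congr rfl
  intro k _
  rw [one_div]

lemma hasDerivAt_logGammaSeq (n : ℕ) {z : ℝ} (hz : 0 < z) :
    HasDerivAt (fun w => Real.BohrMollerup.logGammaSeq w n) (d1 n z) z := by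
  have hsum : ∀ m : ℕ, m ∈ Finset.range (n+1) →
      HasDerivAt (fun w : ℝ => Real.log (w + m)) (1/(z+m)) z := by
    intro m _
    have hne : z + (m:ℝ) ≠ 0 := by positivity
    have h1 : HasDerivAt (fun w : ℝ => w + (m:ℝ)) 1 z := (hasDerivAt_id z).add_const _
    have := h1.log hne
    simpa using this
  have hS : HasDerivAt (fun w : ℝ => ∑ m ∈ Finset.range (n+1), Real.log (w + m))
      (∑ m ∈ Finset.range (n+1), 1/(z+m)) z := HasDerivAt.fun_sum hsum
  have hlin : HasDerivAt (fun w : ℝ => w * Real.log n + Real.log (Nat.factorial n)) (Real.log n) z :=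
    (hasDerivAt_mul_const _).add_const _
  have htot := hlin.sub hS
  have e : (fun w => Real.BohrMollerup.logGammaSeq w n)
      = fun w : ℝ => (w * Real.log n + Real.log (Nat.factorial n)) - ∑ m ∈ Finset.range (n+1), Real.log (w + m) := by
    funext w
    rw [Real.BohrMollerup.logGammaSeq]
  rw [e]
  refine htot.congr_deriv ?_
  symm
  rw [d1]
  have e2 : ∑ m ∈ Finset.range (n+1), 1/(z+(m:ℝ))
      = 1/z + ∑ k ∈ Finset.range n, 1/(z+((k:ℝ)+1)) := by
    rw [Finset.sum_range_succ' (fun m => 1/(z+(m:ℝ)))]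
    push_cast
    rw [add_comm]
    norm_num
  rw [e2, harmonic_cast]
  simp only [dig]
  rw [Finset.sum_sub_distrib]
  push_cast
  ring

lemma d1_tendsto {z : ℝ} (hz : 0 < z) : Tendsto (fun n => d1 n z) atTop (𝓝 (D z)) := by
  have h1 : Tendsto (fun n : ℕ => Real.log n - (harmonic n : ℝ)) atTop
      (𝓝 (-Real.eulerMascheroniConstant)) := by
    have := Real.tendsto_harmonic_sub_log.neg
    simpa [neg_sub] using this
  have h2 : Tendsto (fun n : ℕ => ∑ k ∈ Finset.range n, dig k z) atTop
      (𝓝 (∑' k, dig k z)) := (summable_dig hz).hasSum.tendsto_sum_nat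
  have h3 := (h1.sub_const (1/z)).add h2
  simp only [d1, D]
  exact h3

lemma tendstoUniformlyOn_self {f : ℝ → ℝ} {s : Set ℝ} :
    TendstoUniformlyOn (fun _ : ℕ => f) f atTop s :=
  fun u hu => Eventually.of_forall fun _ z _ => refl_mem_uniformity hu

lemma d1_unif {x : ℝ} (hx : 0 < x) :
    TendstoUniformlyOn d1 D atTop (Ioo (x/2) (x+1)) := by
  have hA : TendstoUniformlyOn (fun (n:ℕ) (_:ℝ) => Real.log n - (harmonic n : ℝ))
      (fun _ => -Real.eulerMascheroniConstant) atTop (Ioo (x/2) (x+1)) := by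
    apply Tendsto.tendstoUniformlyOn_const
    have := Real.tendsto_harmonic_sub_log.neg
    simpa [neg_sub] using this
  have hB : TendstoUniformlyOn (fun (_:ℕ) (z:ℝ) => -(1/z)) (fun z => -(1/z)) atTop
      (Ioo (x/2) (x+1)) := tendstoUniformlyOn_self
  have hC : TendstoUniformlyOn (fun (n:ℕ) (z:ℝ) => ∑ k ∈ Finset.range n, dig k z)
      (fun z => ∑' k, dig k z) atTop (Ioo (x/2) (x+1)) := by
    apply tendstoUniformlyOn_tsum_nat (u := fun k => (x+1) * (1/(1+(k:ℝ))^2))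
    · exact ((summable_inv_sq one_pos)).mul_left _
    · intro k z hz
      rcases hz with ⟨hz1, hz2⟩
      have hzpos : 0 < z := lt_trans (by positivity) hz1
      rw [Real.norm_eq_abs, abs_of_nonneg (dig_nonneg hzpos)]
      calc dig k z ≤ z * (1/(1+(k:ℝ))^2) := dig_le hzpos
      _ ≤ (x+1) * (1/(1+(k:ℝ))^2) := by
          apply mul_le_mul_of_nonneg_right (le_of_lt hz2) (by positivity)
  have h := (hA.add hB).add hC
  have h2 := h.congr (F' := d1) (Eventually.of_forall (fun n z _ => by
    simp only [Pi.add_apply, d1]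
    ring))
  apply h2.congr_right
  intro z _
  simp only [Pi.add_apply, D]
  ring

lemma hasDerivAt_log_gamma {x : ℝ} (hx : 0 < x) :
    HasDerivAt (fun y => Real.log (Real.Gamma y)) (D x) x := by
  apply hasDerivAt_of_tendstoUniformlyOn isOpen_Ioo (d1_unif hx)
    (f := fun n z => Real.BohrMollerup.logGammaSeq z n)
  · apply Eventually.of_forall
    intro n z hz
    rcases hz with ⟨hz1, _⟩
    exact hasDerivAt_logGammaSeq n (lt_trans (by positivity) hz1)
  · intro z hz
    rcases hz with ⟨hz1, _⟩
    exact Real.BohrMollerup.tendsto_log_gamma (lt_trans (by positivity) hz1)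
  · exact ⟨by linarith, by linarith⟩

lemma digamma_eq {x : ℝ} (hx : 0 < x) : digamma x = D x :=
  (hasDerivAt_log_gamma hx).deriv

lemma hasDerivAt_D {x : ℝ} (hx : 0 < x) : HasDerivAt D (T x) x := by
  have hmem : x ∈ Ioo (x/2) (x+1) := ⟨by linarith, by linarith⟩
  have hu : Summable (fun k : ℕ => 1/(x/2+((k:ℝ)+1))^2) := by
    have h0 := summable_inv_sq (show (0:ℝ) < x/2+1 by linarith)
    apply h0.congr
    intro k
    congr 2
    ring
  have hg : ∀ (k:ℕ) (z:ℝ), z ∈ Ioo (x/2) (x+1) → HasDerivAt (dig k) (1/(z+((k:ℝ)+1))^2) z :=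
    fun k z hz => hasDerivAt_dig k (lt_trans (by positivity) hz.1)
  have hg' : ∀ (k:ℕ) (z:ℝ), z ∈ Ioo (x/2) (x+1) →
      ‖1/(z+((k:ℝ)+1))^2‖ ≤ 1/(x/2+((k:ℝ)+1))^2 := by
    intro k z hz
    have hk : (0:ℝ) ≤ k := Nat.cast_nonneg k
    have hz1 := hz.1
    have hx2 : (0:ℝ) < x/2 := by linarith
    rw [Real.norm_eq_abs, abs_of_nonneg (by positivity)]
    apply one_div_le_one_div_of_le (by positivity)
    nlinarith
  have ht := hasDerivAt_tsum_of_isPreconnected hu isOpen_Ioo isPreconnected_Ioo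
    hg hg' hmem (summable_dig hx) hmem
  have hinv : HasDerivAt (fun z : ℝ => -Real.eulerMascheroniConstant - 1/z) (1/x^2) x := by
    have h1 := hasDerivAt_inv (ne_of_gt hx)
    have h2 := h1.const_sub (-Real.eulerMascheroniConstant)
    have e : (fun z : ℝ => -Real.eulerMascheroniConstant - 1/z)
        = fun w => -Real.eulerMascheroniConstant - w⁻¹ := by
      funext w
      simp [one_div]
    rw [e]
    exact h2.congr_deriv (by ring)
  have hDsum := hinv.add ht
  have eT : 1/x^2 + ∑' k : ℕ, 1/(x+((k:ℝ)+1))^2 = T x := by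
    rw [T_shift x hx]
    congr 1
    apply tsum_congr
    intro k
    congr 2
    ring
  have eD : (fun z : ℝ => (-Real.eulerMascheroniConstant - 1/z) + ∑' k, dig k z) = D := by
    funext z
    rw [D]
  rw [← eT, ← eD]
  exact hDsum

lemma trigamma_eq {x : ℝ} (hx : 0 < x) : trigamma x = T x := by
  have hev : digamma =ᶠ[𝓝 x] D := by
    filter_upwards [Ioi_mem_nhds hx] with z hz using digamma_eq hz
  show deriv digamma x = T x
  rw [hev.deriv_eq]
  exact (hasDerivAt_D hx).deriv



lemma superadd_of_le {x y : ℝ} (hx : 0 < x) (hy : 0 < y) (hxy : x ≤ y) :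
    1/T x + 1/T y < 1/T (x+y) := by
  have hs : (0:ℝ) < x + y := by linarith
  have hTx := T_pos hx
  have hTy := T_pos hy
  have hTs := T_pos hs
  rcases le_or_gt (y^4) (x*(x+y)^2*(y+1)^2) with hC | hC
  · -- constrained regime: use rational bounds + PI
    have hLx : (0:ℝ) < 1/x^2 + 1/(x+1) + 1/(2*(x+1)^2) := by positivity
    have hLy : (0:ℝ) < 1/y^2 + 1/(y+1) + 1/(2*(y+1)^2) := by positivity
    have h1 : 1/T x ≤ 1/(1/x^2 + 1/(x+1) + 1/(2*(x+1)^2)) :=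
      one_div_le_one_div_of_le hLx (T_lower hx)
    have h2 : 1/T y ≤ 1/(1/y^2 + 1/(y+1) + 1/(2*(y+1)^2)) :=
      one_div_le_one_div_of_le hLy (T_lower hy)
    have h3 : 1/(1/(x+y)^2 + 1/((x+y)+1/2)) ≤ 1/T (x+y) :=
      one_div_le_one_div_of_le hTs (T_upper hs)
    have eLx : 1/(1/x^2 + 1/(x+1) + 1/(2*(x+1)^2))
        = 2*x^2*(x+1)^2/(2*x^3+5*x^2+4*x+2) := by
      rw [eq_div_iff (by positivity)]
      field_simp
      ring
    have eLy : 1/(1/y^2 + 1/(y+1) + 1/(2*(y+1)^2))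
        = 2*y^2*(y+1)^2/(2*y^3+5*y^2+4*y+2) := by
      rw [eq_div_iff (by positivity)]
      field_simp
      ring
    have eU : 1/(1/(x+y)^2 + 1/((x+y)+1/2))
        = (x+y)^2*(2*(x+y)+1)/(2*(x+y)^2+2*(x+y)+1) := by
      rw [eq_div_iff (by positivity)]
      field_simp
      ring
    have hPI := PI x y hx hxy hC
    calc 1/T x + 1/T y ≤ 2*x^2*(x+1)^2/(2*x^3+5*x^2+4*x+2)
          + 2*y^2*(y+1)^2/(2*y^3+5*y^2+4*y+2) := by
          rw [← eLx, ← eLy]; linarith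
    _ < (x+y)^2*(2*(x+y)+1)/(2*(x+y)^2+2*(x+y)+1) := hPI
    _ = 1/(1/(x+y)^2 + 1/((x+y)+1/2)) := eU.symm
    _ ≤ 1/T (x+y) := h3
  · -- unconstrained regime: direct estimate
    have hTy_ub : T y ≤ (y+1)/y^2 := by
      have := T_upper hy
      have h4 : 1/(y+1/2) ≤ 1/y := one_div_le_one_div_of_le hy (by linarith)
      have h5 : (y+1)/y^2 = 1/y^2 + 1/y := by
        rw [div_add_div _ _ (by positivity) (by positivity), div_eq_div_iff (by positivity) (by positivity)]
        ring
      linarith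
    have hTs_ub : T (x+y) ≤ (y+1)/y^2 := le_trans (T_anti hy (by linarith)) hTy_ub
    have hstep : x^2 * (T (x+y) * T y) < x/(x+y)^2 := by
      have hA : T (x+y) * T y ≤ ((y+1)/y^2)^2 := by
        have := mul_le_mul hTs_ub hTy_ub hTy.le (by positivity)
        nlinarith [this]
      have hB : x^2 * ((y+1)/y^2)^2 < x/(x+y)^2 := by
        rw [div_pow, ← mul_div_assoc, div_lt_div_iff₀ (by positivity) (by positivity)]
        have hy4 : (0:ℝ) < y^4 := by positivity
        have e2 : (y^2)^2 = y^4 := by ring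
        rw [e2]
        nlinarith [mul_pos hx (mul_pos hs hs), sq_nonneg (y+1), mul_pos hx hx]
      calc x^2 * (T (x+y) * T y) ≤ x^2 * ((y+1)/y^2)^2 := by
            apply mul_le_mul_of_nonneg_left hA (by positivity)
      _ < x/(x+y)^2 := hB
    have hgap := T_gap hx hy
    have hx2 : 1/T x < x^2 := by
      have h1 : 1/T x < 1/(1/x^2) := one_div_lt_one_div_of_lt (by positivity) (T_gt hx)
      simpa [one_div_one_div] using h1
    have hkey : x^2 < 1/T (x+y) - 1/T y := by
      have h6 : x^2 * (T (x+y) * T y) < T y - T (x+y) := lt_of_lt_of_le hstep hgap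
      have h7 : 1/T (x+y) - 1/T y = (T y - T (x+y))/(T (x+y) * T y) := by
        rw [div_sub_div _ _ hTs.ne' hTy.ne', div_eq_div_iff (by positivity) (by positivity)]
        ring
      rw [h7, lt_div_iff₀ (by positivity)]
      linarith
    linarith
lemma one_div_T_superadd {x y : ℝ} (hx : 0 < x) (hy : 0 < y) :
    1/T x + 1/T y < 1/T (x+y) := by
  rcases le_total x y with h | h
  · exact superadd_of_le hx hy h
  · have := superadd_of_le hy hx h
    rw [add_comm (1/T x), add_comm x y]
    exact this

lemma T_combined {x y : ℝ} (hx : 0 < x) (hy : 0 < y) :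
    T (x+y) * (1/T x + 1/T y) < 1 := by
  have h := one_div_T_superadd hx hy
  have hTs := T_pos (by linarith : (0:ℝ) < x + y)
  calc T (x+y) * (1/T x + 1/T y) < T (x+y) * (1/T (x+y)) :=
        mul_lt_mul_of_pos_left h hTs
  _ = 1 := by field_simp


end TrigammaAux

theorem jacobian_column_sum_lt_one (n : ℕ) (hn : 2 ≤ n)
    (a b : Fin n → ℝ) (ha : ∀ i, 0 < a i) (hb : ∀ i, 0 < b i) (j : Fin n) :
    (1 / (n - 1 : ℝ)) * ∑ s ∈ univ \ {j},
      trigamma (a j + b s) * (1 / trigamma (a j) + 1 / trigamma (b s)) < 1 := by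
  have hterm : ∀ s : Fin n, trigamma (a j + b s) * (1 / trigamma (a j) + 1 / trigamma (b s)) < 1 := by
    intro s
    rw [TrigammaAux.trigamma_eq (add_pos (ha j) (hb s)),
      TrigammaAux.trigamma_eq (ha j), TrigammaAux.trigamma_eq (hb s)]
    exact TrigammaAux.T_combined (ha j) (hb s)
  have hcard : (univ \ {j}).card = n - 1 := by
    rw [card_sdiff_of_subset (by simp), card_univ, Fintype.card_fin, card_singleton]
  have hne : (univ \ {j}).Nonempty := by
    rw [← card_pos, hcard]
    omega
  have hsum : (∑ s ∈ univ \ {j},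
      trigamma (a j + b s) * (1 / trigamma (a j) + 1 / trigamma (b s))) < (n - 1 : ℝ) := by
    calc (∑ s ∈ univ \ {j}, trigamma (a j + b s) * (1 / trigamma (a j) + 1 / trigamma (b s)))
        < ∑ _s ∈ univ \ {j}, (1:ℝ) :=
          Finset.sum_lt_sum_of_nonempty hne (fun s _ => hterm s)
    _ = ((n - 1 : ℕ) : ℝ) := by rw [Finset.sum_const, hcard]; simp
    _ = (n - 1 : ℝ) := by
          have : (1:ℕ) ≤ n := by omega
          push_cast [Nat.cast_sub this]
          ring
  have hpos : (0:ℝ) < (n:ℝ) - 1 := by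
    have : (2:ℝ) ≤ (n:ℝ) := by exact_mod_cast hn
    linarith
  rw [mul_comm, ← div_eq_mul_one_div]
  rw [div_lt_one hpos]
  exact hsum
end
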